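/- Under the sensor setup and posterior definitions, define Σ̃^t = Σ^f (P^f)^{-1} P (P^f)^{-1} Σ^f + Σ^f (Σ_{j=1}^N a_j H_j^T (R_j^u)^{-1} R_j (R_j^u)^{-1} H_j) Σ^f, C̄ = I − Φ^f Σ^f, and R^{ts} = P^f C̄ Φ^{ts} C̄^T (P^f)^T. Then Σ^t − Σ = (Σ̃^t − Σ) + R^{ts}, and Σ̃^t − Σ ⪰ 0. (Proposition 1 of the paper.) -/

import Mathlib

open Matrix

lemma myPsdSmul {k : ℕ} {M : Matrix (Fin k) (Fin k) ℝ} (h : M.PosSemidef) {c : ℝ} (hc : 0 ≤ c) :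
    (c • M).PosSemidef := by
  constructor
  · show (c • M)ᴴ = c • M
    rw [conjTranspose_smul, star_trivial, h.1]
  · intro x
    have h2 := h.2 x
    have e : (x.sum fun i xi => x.sum fun j xj => star xi * (c • M) i j * xj) =
        c * (x.sum fun i xi => x.sum fun j xj => star xi * M i j * xj) := by
      simp only [Finsupp.sum, Finset.mul_sum, Matrix.smul_apply, smul_eq_mul]
      exact Finset.sum_congr rfl fun i _ => Finset.sum_congr rfl fun j _ => by ring
    rw [e]
    exact mul_nonneg hc h2

lemma myPsdSum {k N' : ℕ} (f : Fin N' → Matrix (Fin k) (Fin k) ℝ) (h : ∀ j, (f j).PosSemidef) :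
    (∑ j, f j).PosSemidef :=
  Finset.sum_induction f _ (fun _ _ ha hb => ha.add hb) Matrix.PosSemidef.zero (fun j _ => h j)

lemma myPsdConj {k l : ℕ} {M : Matrix (Fin k) (Fin k) ℝ} (h : M.PosSemidef)
    (B : Matrix (Fin l) (Fin k) ℝ) : (B * M * Bᵀ).PosSemidef := by
  have := h.mul_mul_conjTranspose_same B
  rwa [conjTranspose_eq_transpose_of_trivial] at this

lemma mySymm {k : ℕ} {M : Matrix (Fin k) (Fin k) ℝ} (h : M.IsHermitian) : Mᵀ = M := by
  rwa [Matrix.IsHermitian, conjTranspose_eq_transpose_of_trivial] at h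

lemma myCancel₁ {k l : ℕ} {A : Matrix (Fin k) (Fin k) ℝ} (h : A.PosDef)
    (X : Matrix (Fin k) (Fin l) ℝ) : A * (A⁻¹ * X) = X := by
  rw [← Matrix.mul_assoc, mul_nonsing_inv _ (isUnit_iff_ne_zero.mpr h.det_pos.ne'), Matrix.one_mul]

lemma myCancel₂ {k l : ℕ} {A : Matrix (Fin k) (Fin k) ℝ} (h : A.PosDef)
    (X : Matrix (Fin k) (Fin l) ℝ) : A⁻¹ * (A * X) = X := by
  rw [← Matrix.mul_assoc, nonsing_inv_mul _ (isUnit_iff_ne_zero.mpr h.det_pos.ne'), Matrix.one_mul]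

/-- Proposition 1 of the paper: with
`Σ̃ᵗ = Σᶠ (Pᶠ)⁻¹ P (Pᶠ)⁻¹ Σᶠ + Σᶠ (∑ⱼ aⱼ Hⱼᵀ (Rⱼᵘ)⁻¹ Rⱼ (Rⱼᵘ)⁻¹ Hⱼ) Σᶠ`,
`C̄ = I − Φᶠ Σᶠ` and `Rᵗˢ = Pᶠ C̄ Φᵗˢ C̄ᵀ (Pᶠ)ᵀ`, one has
`Σᵗ − Σ = (Σ̃ᵗ − Σ) + Rᵗˢ` and `Σ̃ᵗ − Σ ⪰ 0`. -/
theorem stmt1 {n N : ℕ} (hn : 1 ≤ n) (hN : 1 ≤ N)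
    (md : Fin N → ℕ) (hmd : ∀ j, 1 ≤ md j)
    (H : ∀ j, Matrix (Fin (md j)) (Fin n) ℝ)
    (R Ru : ∀ j, Matrix (Fin (md j)) (Fin (md j)) ℝ)
    (hRsymm : ∀ j, (R j).IsSymm) (hRusymm : ∀ j, (Ru j).IsSymm)
    (hR : ∀ j, (R j).PosDef) (hRu : ∀ j, (Ru j).PosDef)
    (a : Fin N → ℝ) (ha : ∀ j, 0 ≤ a j)
    (P dQ : Matrix (Fin n) (Fin n) ℝ) (hPsymm : P.IsSymm) (hP : P.PosDef)
    (hdQsymm : dQ.IsSymm)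
    (Pf : Matrix (Fin n) (Fin n) ℝ) (hPfdef : Pf = P + dQ) (hPf : Pf.PosDef)
    (Phif Phi Phit Phits : Matrix (Fin n) (Fin n) ℝ)
    (hPhif : Phif = ∑ j, a j • ((H j)ᵀ * (Ru j)⁻¹ * H j))
    (hPhi : Phi = ∑ j, a j • ((H j)ᵀ * (R j)⁻¹ * H j))
    (hPhit : Phit = ∑ j, (a j) ^ 2 • ((H j)ᵀ * (Ru j)⁻¹ * R j * (Ru j)⁻¹ * H j))
    (hPhits : Phits = ∑ j, ((a j) ^ 2 - a j) • ((H j)ᵀ * (Ru j)⁻¹ * R j * (Ru j)⁻¹ * H j))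
    (Sig Sigf Sigt SigtTil Cbar Rts : Matrix (Fin n) (Fin n) ℝ)
    (hSig : Sig = (P⁻¹ + Phi)⁻¹)
    (hSigf : Sigf = (Pf⁻¹ + Phif)⁻¹)
    (hSigt : Sigt = Sigf * Pf⁻¹ * P * Pf⁻¹ * Sigf + Sigf * Phit * Sigf)
    (hSigtTil : SigtTil = Sigf * Pf⁻¹ * P * Pf⁻¹ * Sigf +
      Sigf * (∑ j, a j • ((H j)ᵀ * (Ru j)⁻¹ * R j * (Ru j)⁻¹ * H j)) * Sigf)
    (hCbar : Cbar = (1 : Matrix (Fin n) (Fin n) ℝ) - Phif * Sigf)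
    (hRts : Rts = Pf * Cbar * Phits * Cbarᵀ * Pfᵀ) :
    Sigt - Sig = (SigtTil - Sig) + Rts ∧ (SigtTil - Sig).PosSemidef := by
  -- basic symmetry facts
  have hPT : Pᵀ = P := hPsymm
  have hPfT : Pfᵀ = Pf := by rw [hPfdef, transpose_add, hPsymm, hdQsymm]
  have hPiT : (P⁻¹)ᵀ = P⁻¹ := by rw [transpose_nonsing_inv, hPT]
  have hPfiT : (Pf⁻¹)ᵀ = Pf⁻¹ := by rw [transpose_nonsing_inv, hPfT]
  have hRT : ∀ j, (R j)ᵀ = R j := fun j => hRsymm j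
  have hRuiT : ∀ j, ((Ru j)⁻¹)ᵀ = (Ru j)⁻¹ := fun j => by
    rw [transpose_nonsing_inv, hRusymm j]
  -- positive semidefiniteness of the information matrices
  have hKpsd : ∀ j, ((H j)ᵀ * (Ru j)⁻¹ * H j).PosSemidef := fun j => by
    have := myPsdConj (hRu j).inv.posSemidef (H j)ᵀ
    rwa [transpose_transpose] at this
  have hLpsd : ∀ j, ((H j)ᵀ * (R j)⁻¹ * H j).PosSemidef := fun j => by
    have := myPsdConj (hR j).inv.posSemidef (H j)ᵀ
    rwa [transpose_transpose] at this
  have hPhifPsd : Phif.PosSemidef := by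
    rw [hPhif]; exact myPsdSum _ fun j => myPsdSmul (hKpsd j) (ha j)
  have hPhiPsd : Phi.PosSemidef := by
    rw [hPhi]; exact myPsdSum _ fun j => myPsdSmul (hLpsd j) (ha j)
  have hPhifT : Phifᵀ = Phif := mySymm hPhifPsd.1
  -- positive definiteness of Sigf and Sig
  have hSfPD : (Pf⁻¹ + Phif).PosDef := hPf.inv.add_posSemidef hPhifPsd
  have hSPD : (P⁻¹ + Phi).PosDef := hP.inv.add_posSemidef hPhiPsd
  have hSigfPD : Sigf.PosDef := by rw [hSigf]; exact hSfPD.inv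
  have hSigPD : Sig.PosDef := by rw [hSig]; exact hSPD.inv
  have hSigfT : Sigfᵀ = Sigf := mySymm hSigfPD.1
  have hSigT : Sigᵀ = Sig := mySymm hSigPD.1
  have hSfL : Sigf * (Pf⁻¹ + Phif) = 1 := by
    rw [hSigf]; exact nonsing_inv_mul _ (isUnit_iff_ne_zero.mpr hSfPD.det_pos.ne')
  have hSfR : (Pf⁻¹ + Phif) * Sigf = 1 := by
    rw [hSigf]; exact mul_nonsing_inv _ (isUnit_iff_ne_zero.mpr hSfPD.det_pos.ne')
  have hSL : Sig * (P⁻¹ + Phi) = 1 := by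
    rw [hSig]; exact nonsing_inv_mul _ (isUnit_iff_ne_zero.mpr hSPD.det_pos.ne')
  -- Part 1: Pf * Cbar = Sigf
  have hCbarTPf : Cbarᵀ * Pf = Sigf := by
    have expand : Cbarᵀ * Pf = Pf - Sigf * (Phif * Pf) := by
      rw [hCbar]
      simp [transpose_sub, transpose_mul, hSigfT, hPhifT, sub_mul, Matrix.mul_assoc]
    have hPfi1 : Pf⁻¹ * Pf = 1 := nonsing_inv_mul _ (isUnit_iff_ne_zero.mpr hPf.det_pos.ne')
    have key : Pf = Sigf + Sigf * (Phif * Pf) := by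
      have h := congrArg (fun X => X * Pf) hSfL
      simpa [mul_add, add_mul, Matrix.mul_assoc, hPfi1] using h.symm
    rw [expand]
    exact sub_eq_of_eq_add key
  have hPfCbar : Pf * Cbar = Sigf := by
    have h : Pf * Cbar = (Cbarᵀ * Pfᵀ)ᵀ := by simp [transpose_mul]
    rw [h, hPfT, hCbarTPf, hSigfT]
  have hCbarTPfT : Cbarᵀ * Pfᵀ = Sigf := by rw [hPfT, hCbarTPf]
  have hRtsEq : Rts = Sigf * Phits * Sigf := by
    rw [hRts, hPfCbar, Matrix.mul_assoc (Sigf * Phits), hCbarTPfT]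
  have hPhitsplit : Phit =
      (∑ j, a j • ((H j)ᵀ * (Ru j)⁻¹ * R j * (Ru j)⁻¹ * H j)) + Phits := by
    rw [hPhit, hPhits, ← Finset.sum_add_distrib]
    refine Finset.sum_congr rfl fun j _ => ?_
    rw [← add_smul]; congr 1; ring
  have part1 : Sigt - Sig = (SigtTil - Sig) + Rts := by
    rw [hSigt, hSigtTil, hPhitsplit, hRtsEq, mul_add, add_mul]
    abel
  refine ⟨part1, ?_⟩
  -- Part 2: completion of squares
  set X0 : Matrix (Fin n) (Fin n) ℝ := Sigf * Pf⁻¹ - Sig * P⁻¹ with hX0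
  set Y : ∀ j, Matrix (Fin n) (Fin (md j)) ℝ :=
    fun j => Sigf * (H j)ᵀ * (Ru j)⁻¹ * R j - Sig * (H j)ᵀ with hY
  have hT0 : X0 * P * X0ᵀ =
      Sigf * Pf⁻¹ * P * Pf⁻¹ * Sigf - Sigf * Pf⁻¹ * Sig - Sig * Pf⁻¹ * Sigf
        + Sig * P⁻¹ * Sig := by
    have hX0T : X0ᵀ = Pf⁻¹ * Sigf - P⁻¹ * Sig := by
      rw [hX0, transpose_sub, transpose_mul, transpose_mul, hPiT, hPfiT, hSigfT, hSigT]
    rw [hX0, hX0T]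
    simp only [sub_mul, mul_sub, Matrix.mul_assoc, myCancel₁ hP, myCancel₂ hP]
    abel
  have hterm : ∀ j, Y j * (R j)⁻¹ * (Y j)ᵀ =
      Sigf * ((H j)ᵀ * (Ru j)⁻¹ * R j * (Ru j)⁻¹ * H j) * Sigf
        - Sigf * ((H j)ᵀ * (Ru j)⁻¹ * H j) * Sig
        - Sig * ((H j)ᵀ * (Ru j)⁻¹ * H j) * Sigf
        + Sig * ((H j)ᵀ * (R j)⁻¹ * H j) * Sig := by
    intro j
    have hYT : (Y j)ᵀ = R j * ((Ru j)⁻¹ * (H j * Sigf)) - H j * Sig := by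
      rw [hY]
      simp [transpose_sub, transpose_mul, hRT j, hRuiT j, hSigfT, hSigT, Matrix.mul_assoc]
    rw [hY, hYT]
    simp only [Matrix.sub_mul, Matrix.mul_sub, Matrix.mul_assoc, myCancel₁ (hR j),
      myCancel₂ (hR j)]
    abel
  have hsum : (∑ j, a j • (Y j * (R j)⁻¹ * (Y j)ᵀ)) =
      Sigf * (∑ j, a j • ((H j)ᵀ * (Ru j)⁻¹ * R j * (Ru j)⁻¹ * H j)) * Sigf
        - Sigf * Phif * Sig - Sig * Phif * Sigf + Sig * Phi * Sig := by
    calc (∑ j, a j • (Y j * (R j)⁻¹ * (Y j)ᵀ))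
        = ∑ j, (a j • (Sigf * ((H j)ᵀ * (Ru j)⁻¹ * R j * (Ru j)⁻¹ * H j) * Sigf)
            - a j • (Sigf * ((H j)ᵀ * (Ru j)⁻¹ * H j) * Sig)
            - a j • (Sig * ((H j)ᵀ * (Ru j)⁻¹ * H j) * Sigf)
            + a j • (Sig * ((H j)ᵀ * (R j)⁻¹ * H j) * Sig)) := by
          refine Finset.sum_congr rfl fun j _ => ?_
          rw [hterm j]; module
      _ = (∑ j, a j • (Sigf * ((H j)ᵀ * (Ru j)⁻¹ * R j * (Ru j)⁻¹ * H j) * Sigf))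
            - (∑ j, a j • (Sigf * ((H j)ᵀ * (Ru j)⁻¹ * H j) * Sig))
            - (∑ j, a j • (Sig * ((H j)ᵀ * (Ru j)⁻¹ * H j) * Sigf))
            + (∑ j, a j • (Sig * ((H j)ᵀ * (R j)⁻¹ * H j) * Sig)) := by
          rw [Finset.sum_add_distrib, Finset.sum_sub_distrib, Finset.sum_sub_distrib]
      _ = Sigf * (∑ j, a j • ((H j)ᵀ * (Ru j)⁻¹ * R j * (Ru j)⁻¹ * H j)) * Sigf
            - Sigf * Phif * Sig - Sig * Phif * Sigf + Sig * Phi * Sig := by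
          rw [hPhif, hPhi]
          simp only [Finset.mul_sum, Finset.sum_mul, Matrix.mul_smul, Matrix.smul_mul]
  have e1 : Sigf * Pf⁻¹ * Sig + Sigf * Phif * Sig = Sig := by
    have h := congrArg (fun X => X * Sig) hSfL
    simpa [mul_add, add_mul, Matrix.mul_assoc] using h
  have e2 : Sig * Pf⁻¹ * Sigf + Sig * Phif * Sigf = Sig := by
    have h := congrArg (fun X => Sig * X) hSfR
    simpa [mul_add, add_mul, Matrix.mul_assoc] using h
  have e3 : Sig * P⁻¹ * Sig + Sig * Phi * Sig = Sig := by
    have h := congrArg (fun X => X * Sig) hSL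
    simpa [mul_add, add_mul, Matrix.mul_assoc] using h
  have key : SigtTil - Sig = X0 * P * X0ᵀ + ∑ j, a j • (Y j * (R j)⁻¹ * (Y j)ᵀ) := by
    rw [hT0, hsum, hSigtTil]
    have goal' : (Sigf * Pf⁻¹ * P * Pf⁻¹ * Sigf - Sigf * Pf⁻¹ * Sig - Sig * Pf⁻¹ * Sigf
          + Sig * P⁻¹ * Sig)
        + (Sigf * (∑ j, a j • ((H j)ᵀ * (Ru j)⁻¹ * R j * (Ru j)⁻¹ * H j)) * Sigf
          - Sigf * Phif * Sig - Sig * Phif * Sigf + Sig * Phi * Sig)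
        = (Sigf * Pf⁻¹ * P * Pf⁻¹ * Sigf
            + Sigf * (∑ j, a j • ((H j)ᵀ * (Ru j)⁻¹ * R j * (Ru j)⁻¹ * H j)) * Sigf)
          + ((Sig * P⁻¹ * Sig + Sig * Phi * Sig)
            - ((Sigf * Pf⁻¹ * Sig + Sigf * Phif * Sig)
              + (Sig * Pf⁻¹ * Sigf + Sig * Phif * Sigf))) := by abel
    rw [goal', e1, e2, e3]
    abel
  rw [key]
  exact (myPsdConj hP.posSemidef X0).add
    (myPsdSum _ fun j => myPsdSmul (myPsdConj (hR j).inv.posSemidef (Y j)) (ha j))
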